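/- In type C_n with long roots 2ε_i and short positive roots ε_i + ε_j (i < j), a subset S of Δ_𝔞 = {ε_i + ε_j : 1 ≤ i < j ≤ n} ∪ {2ε_i : 1 ≤ i ≤ n} is strongly orthogonal if and only if all indices occurring in the roots of S are pairwise distinct. Consequently the number c_{n,k} of strongly orthogonal k-subsets equals Σ_{t=0}^{min(k, n−k)} C(n−2t, k−t)·C(n,2t)·(2t)!/(t!·2^t). -/

import Mathlib

noncomputable section

/-- The standard dot product on `ℝⁿ`. -/
def dot {n : ℕ} (x y : Fin n → ℝ) : ℝ := ∑ i, x i * y i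

/-- The standard basis vector `ε i` of `ℝⁿ`. -/
def eps {n : ℕ} (i : Fin n) : Fin n → ℝ := Pi.single i 1

namespace SO8
open scoped Classical

variable {n : ℕ}

lemma eps_apply (i j : Fin n) : eps i j = if j = i then 1 else 0 := by
  simp [eps, Pi.single_apply]

def vecOf (e : Sym2 (Fin n)) : Fin n → ℝ :=
  Sym2.lift ⟨fun i j => eps i + eps j, fun i j => by simp [add_comm]⟩ e

lemma vecOf_mk (i j : Fin n) : vecOf s(i, j) = eps i + eps j := rfl

lemma vecOf_apply (i j k : Fin n) :
    vecOf s(i, j) k = (if k = i then (1:ℝ) else 0) + (if k = j then 1 else 0) := by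
  simp [vecOf_mk, eps_apply]

lemma vecOf_ne_zero_iff (e : Sym2 (Fin n)) (k : Fin n) :
    vecOf e k ≠ 0 ↔ k ∈ e := by
  induction e using Sym2.inductionOn with
  | hf i j =>
    rw [vecOf_apply, Sym2.mem_iff]
    by_cases h1 : k = i <;> by_cases h2 : k = j <;>
      simp [h1, h2] <;> split_ifs <;> norm_num

lemma sym2_mem_ext {a b c d : Fin n} (hm : ∀ k, k ∈ s(a,b) ↔ k ∈ s(c,d)) :
    s(a,b) = s(c,d) := by
  have hac : a = c ∨ a = d := by have := (hm a).1 (by simp); simpa using this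
  have hbd : b = c ∨ b = d := by have := (hm b).1 (by simp); simpa using this
  have hca : c = a ∨ c = b := by have := (hm c).2 (by simp); simpa using this
  have hda : d = a ∨ d = b := by have := (hm d).2 (by simp); simpa using this
  rw [Sym2.eq_iff]
  rcases hac with h1|h1 <;> rcases hbd with h2|h2 <;> rcases hca with h3|h3 <;>
    rcases hda with h4|h4 <;> subst_vars <;> simp

lemma vecOf_injective : Function.Injective (vecOf (n := n)) := by
  intro e f h
  induction e using Sym2.inductionOn with
  | hf a b =>
    induction f using Sym2.inductionOn with
    | hf c d =>
      refine sym2_mem_ext fun k => ?_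
      rw [← vecOf_ne_zero_iff, ← vecOf_ne_zero_iff, h]

def CC (n : ℕ) : Set (Fin n → ℝ) :=
  {v | (∃ i j : Fin n, i ≠ j ∧
        (v = eps i + eps j ∨ v = eps i - eps j ∨ v = -eps i - eps j)) ∨
      ∃ i : Fin n, v = (2 : ℝ) • eps i ∨ v = -((2 : ℝ) • eps i)}

lemma rootTwo {w : Fin n → ℝ} (hw : w ∈ CC n) {i : Fin n}
    (hi : w i = 2 ∨ w i = -2) : ∀ j, j ≠ i → w j = 0 := by
  intro j hj
  rcases hw with ⟨a, b, hab, h | h | h⟩ | ⟨a, h | h⟩ <;> subst h <;>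
    simp only [Pi.add_apply, Pi.sub_apply, Pi.neg_apply, Pi.smul_apply,
      smul_eq_mul, eps_apply] at hi ⊢ <;>
    split_ifs at hi ⊢
  all_goals try rfl
  all_goals try norm_num
  all_goals try (exfalso; subst_vars; simp_all)
  all_goals norm_num at hi

lemma rootSupp {w : Fin n → ℝ} (hw : w ∈ CC n) :
    ∃ i j : Fin n, ∀ k, k ≠ i → k ≠ j → w k = 0 := by
  rcases hw with ⟨a, b, hab, h | h | h⟩ | ⟨a, h | h⟩ <;> subst h
  · exact ⟨a, b, fun k h1 h2 => by simp [eps_apply, h1, h2]⟩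
  · exact ⟨a, b, fun k h1 h2 => by simp [eps_apply, h1, h2]⟩
  · exact ⟨a, b, fun k h1 h2 => by simp [eps_apply, h1, h2]⟩
  · exact ⟨a, a, fun k h1 h2 => by simp [eps_apply, h1, h2]⟩
  · exact ⟨a, a, fun k h1 h2 => by simp [eps_apply, h1, h2]⟩


lemma three_pigeon {α : Type*} {a b c i j : α} (hab : a ≠ b) (hac : a ≠ c) (hbc : b ≠ c)
    (ha : a = i ∨ a = j) (hb : b = i ∨ b = j) (hc : c = i ∨ c = j) : False := by
  rcases ha with rfl | rfl <;> rcases hb with rfl | rfl <;> rcases hc with rfl | rfl <;> simp_all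

lemma shared_root {a b c d : Fin n} (hef : s(a,b) ≠ s(c,d)) (x : Fin n)
    (hx1 : x ∈ s(a,b)) (hx2 : x ∈ s(c,d)) :
    vecOf s(a,b) - vecOf s(c,d) ∈ CC n := by
  rw [Sym2.mem_iff] at hx1 hx2
  rcases hx1 with rfl | rfl <;> rcases hx2 with rfl | rfl
  · -- a = c
    have hbd : b ≠ d := fun h => hef (by rw [h])
    refine Or.inl ⟨b, d, hbd, Or.inr (Or.inl ?_)⟩
    simp only [vecOf_mk]; abel
  · -- a = d
    have hbc : b ≠ c := fun h => hef (by rw [h, Sym2.eq_swap])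
    refine Or.inl ⟨b, c, hbc, Or.inr (Or.inl ?_)⟩
    simp only [vecOf_mk]; abel
  · -- b = c
    have had : a ≠ d := fun h => hef (by rw [h, Sym2.eq_swap])
    refine Or.inl ⟨a, d, had, Or.inr (Or.inl ?_)⟩
    simp only [vecOf_mk]; abel
  · -- b = d
    have hac : a ≠ c := fun h => hef (by rw [h])
    refine Or.inl ⟨a, c, hac, Or.inr (Or.inl ?_)⟩
    simp only [vecOf_mk]; abel

lemma pair_iff {a b c d : Fin n} (hef : s(a,b) ≠ s(c,d)) :
    (vecOf s(a,b) + vecOf s(c,d) ∉ CC n ∧ vecOf s(a,b) - vecOf s(c,d) ∉ CC n) ↔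
      ∀ i : Fin n, ¬(i ∈ s(a,b) ∧ i ∈ s(c,d)) := by
  constructor
  · intro h i hi
    exact absurd (shared_root hef i hi.1 hi.2) h.2
  · intro hd
    have hac : a ≠ c := fun h => hd a ⟨by simp, by simp [h]⟩
    have had : a ≠ d := fun h => hd a ⟨by simp, by simp [h]⟩
    have hbc : b ≠ c := fun h => hd b ⟨by simp, by simp [h]⟩
    have hbd : b ≠ d := fun h => hd b ⟨by simp, by simp [h]⟩
    constructor
    · intro hmem
      by_cases hab : a = b <;> by_cases hcd : c = d
      · obtain rfl := hab; obtain rfl := hcd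
        have hwa : (vecOf s(a,a) + vecOf s(c,c)) a = 2 := by
          norm_num [vecOf_apply, hac]
        have hwc : (vecOf s(a,a) + vecOf s(c,c)) c = 2 := by
          norm_num [vecOf_apply, Ne.symm hac]
        have h0 := rootTwo hmem (Or.inl hwa) c (Ne.symm hac)
        rw [hwc] at h0; norm_num at h0
      · obtain rfl := hab
        have hwa : (vecOf s(a,a) + vecOf s(c,d)) a = 2 := by
          norm_num [vecOf_apply, hac, had]
        have hwc : (vecOf s(a,a) + vecOf s(c,d)) c = 1 := by
          norm_num [vecOf_apply, Ne.symm hac, hcd]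
        have h0 := rootTwo hmem (Or.inl hwa) c (Ne.symm hac)
        rw [hwc] at h0; norm_num at h0
      · obtain rfl := hcd
        have hwc : (vecOf s(a,b) + vecOf s(c,c)) c = 2 := by
          norm_num [vecOf_apply, Ne.symm hac, Ne.symm hbc]
        have hwa : (vecOf s(a,b) + vecOf s(c,c)) a = 1 := by
          norm_num [vecOf_apply, hab, hac]
        have h0 := rootTwo hmem (Or.inl hwc) a hac
        rw [hwa] at h0; norm_num at h0
      · obtain ⟨i0, j0, hv⟩ := rootSupp hmem
        have key : ∀ k, (vecOf s(a,b) + vecOf s(c,d)) k ≠ 0 → k = i0 ∨ k = j0 := by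
          intro k hk
          by_contra hcon
          push_neg at hcon
          exact hk (hv k hcon.1 hcon.2)
        refine three_pigeon hab hac hbc (key a ?_) (key b ?_) (key c ?_)
        · norm_num [vecOf_apply, hab, hac, had]
        · norm_num [vecOf_apply, Ne.symm hab, hbc, hbd]
        · norm_num [vecOf_apply, Ne.symm hac, Ne.symm hbc, hcd]
    · intro hmem
      by_cases hab : a = b <;> by_cases hcd : c = d
      · obtain rfl := hab; obtain rfl := hcd
        have hwa : (vecOf s(a,a) - vecOf s(c,c)) a = 2 := by
          norm_num [vecOf_apply, hac]
        have hwc : (vecOf s(a,a) - vecOf s(c,c)) c = -2 := by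
          norm_num [vecOf_apply, Ne.symm hac]
        have h0 := rootTwo hmem (Or.inl hwa) c (Ne.symm hac)
        rw [hwc] at h0; norm_num at h0
      · obtain rfl := hab
        have hwa : (vecOf s(a,a) - vecOf s(c,d)) a = 2 := by
          norm_num [vecOf_apply, hac, had]
        have hwc : (vecOf s(a,a) - vecOf s(c,d)) c = -1 := by
          norm_num [vecOf_apply, Ne.symm hac, hcd]
        have h0 := rootTwo hmem (Or.inl hwa) c (Ne.symm hac)
        rw [hwc] at h0; norm_num at h0
      · obtain rfl := hcd
        have hwc : (vecOf s(a,b) - vecOf s(c,c)) c = -2 := by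
          norm_num [vecOf_apply, Ne.symm hac, Ne.symm hbc]
        have hwa : (vecOf s(a,b) - vecOf s(c,c)) a = 1 := by
          norm_num [vecOf_apply, hab, hac]
        have h0 := rootTwo hmem (Or.inr hwc) a hac
        rw [hwa] at h0; norm_num at h0
      · obtain ⟨i0, j0, hv⟩ := rootSupp hmem
        have key : ∀ k, (vecOf s(a,b) - vecOf s(c,d)) k ≠ 0 → k = i0 ∨ k = j0 := by
          intro k hk
          by_contra hcon
          push_neg at hcon
          exact hk (hv k hcon.1 hcon.2)
        refine three_pigeon hab hac hbc (key a ?_) (key b ?_) (key c ?_)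
        · norm_num [vecOf_apply, hab, hac, had]
        · norm_num [vecOf_apply, Ne.symm hab, hbc, hbd]
        · norm_num [vecOf_apply, Ne.symm hac, Ne.symm hbc, hcd]

/-! ### Counting machinery on `Sym2 (Fin n)` -/

def disj2 (e f : Sym2 (Fin n)) : Prop := ∀ v : Fin n, ¬(v ∈ e ∧ v ∈ f)

def supp (P : Finset (Sym2 (Fin n))) : Finset (Fin n) :=
  Finset.univ.filter (fun v => ∃ e ∈ P, v ∈ e)

lemma mem_supp {P : Finset (Sym2 (Fin n))} {v : Fin n} :
    v ∈ supp P ↔ ∃ e ∈ P, v ∈ e := by simp [supp]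

def IsPM (B : Finset (Fin n)) (P : Finset (Sym2 (Fin n))) : Prop :=
  (∀ e ∈ P, ¬ e.IsDiag) ∧ (∀ e ∈ P, ∀ f ∈ P, e ≠ f → disj2 e f) ∧ supp P = B

def f2 : ℕ → ℕ
  | 0 => 1
  | 1 => 0
  | (m+2) => (m+1) * f2 m

def pt (P : Finset (Sym2 (Fin n))) (a : Fin n) : Fin n :=
  if h : ∃ b, s(a,b) ∈ P then h.choose else a

lemma pt_spec {P : Finset (Sym2 (Fin n))} {a b : Fin n}
    (hP : ∀ e ∈ P, ∀ f ∈ P, e ≠ f → disj2 e f) (hab : s(a,b) ∈ P) : pt P a = b := by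
  have h : ∃ b, s(a,b) ∈ P := ⟨b, hab⟩
  rw [pt, dif_pos h]
  have h1 := h.choose_spec
  by_contra hne
  have hne' : s(a, h.choose) ≠ s(a, b) := fun hcon => hne (Sym2.congr_right.mp hcon)
  exact hP _ h1 _ hab hne' a ⟨by simp, by simp⟩

lemma card_pm : ∀ (m : ℕ) (B : Finset (Fin n)), B.card = m →
    (Finset.univ.filter (IsPM B)).card = f2 m := by
  intro m
  induction m using Nat.strong_induction_on with
  | _ m ih =>
    intro B hB
    rcases B.eq_empty_or_nonempty with rfl | ⟨a, ha⟩
    · simp only [Finset.card_empty] at hB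
      subst hB
      have he : Finset.univ.filter (IsPM (∅ : Finset (Fin n))) = {∅} := by
        ext P
        simp only [Finset.mem_filter, Finset.mem_univ, true_and, Finset.mem_singleton]
        constructor
        · rintro ⟨hnd, hdj, hsupp⟩
          by_contra hne
          obtain ⟨e, he⟩ := Finset.nonempty_iff_ne_empty.2 hne
          have : e.out.1 ∈ supp P := mem_supp.2 ⟨e, he, Sym2.out_fst_mem e⟩
          rw [hsupp] at this
          exact absurd this (Finset.notMem_empty _)
        · rintro rfl
          refine ⟨by simp, by simp, ?_⟩
          ext v; simp [mem_supp]
      rw [he]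
      rfl
    · -- a ∈ B, B nonempty
      have hm1 : 1 ≤ m := by
        rw [← hB]; exact Finset.card_pos.2 ⟨a, ha⟩
      -- every PM P of B contains the edge s(a, pt P a)
      have key : ∀ P ∈ Finset.univ.filter (IsPM B), s(a, pt P a) ∈ P ∧ pt P a ∈ B.erase a := by
        intro P hP
        rw [Finset.mem_filter] at hP
        obtain ⟨-, hnd, hdj, hsupp⟩ := hP
        have haB : a ∈ supp P := by rw [hsupp]; exact ha
        obtain ⟨e, heP, hae⟩ := mem_supp.1 haB
        obtain ⟨b, rfl⟩ := Sym2.mem_iff_exists.1 hae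
        have hpt : pt P a = b := pt_spec hdj heP
        rw [hpt]
        have hba : b ≠ a := by
          intro h; subst h
          exact hnd _ heP (Sym2.mk_isDiag_iff.2 rfl)
        refine ⟨heP, Finset.mem_erase.2 ⟨hba, ?_⟩⟩
        rw [← hsupp]
        exact mem_supp.2 ⟨_, heP, by simp⟩
      rw [Finset.card_eq_sum_card_fiberwise (f := fun P => pt P a) (t := B.erase a)
        (fun P hP => (key P hP).2)]
      -- each fiber has size f2 (m - 2)
      have hfib : ∀ b ∈ B.erase a,
          ((Finset.univ.filter (IsPM B)).filter (fun P => pt P a = b)).card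
            = f2 (m - 2) := by
        intro b hb
        obtain ⟨hba, hbB⟩ := Finset.mem_erase.1 hb
        set B' := (B.erase a).erase b with hB'
        have hB'card : B'.card = m - 2 := by
          rw [hB', Finset.card_erase_of_mem hb, Finset.card_erase_of_mem ha, hB]
          omega
        have hab : a ≠ b := fun h => hba h.symm
        have hcard' : (Finset.univ.filter (IsPM B')).card = f2 (m - 2) :=
          ih (m - 2) (by omega) B' hB'card
        rw [← hcard']
        apply Finset.card_bij (fun P _ => P.erase s(a,b))
        · -- maps into
          intro P hP
          rw [Finset.mem_filter] at hP
          obtain ⟨hP1, hptb⟩ := hP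
          rw [Finset.mem_filter] at hP1
          obtain ⟨-, hnd, hdj, hsupp⟩ := hP1
          have habP : s(a,b) ∈ P := by
            have := (key P (by rw [Finset.mem_filter]; exact ⟨Finset.mem_univ _, hnd, hdj, hsupp⟩)).1
            rwa [hptb] at this
          rw [Finset.mem_filter]
          refine ⟨Finset.mem_univ _, fun e he => hnd e (Finset.mem_of_mem_erase he),
            fun e he f hf hef => hdj e (Finset.mem_of_mem_erase he) f (Finset.mem_of_mem_erase hf) hef, ?_⟩
          -- supp (P.erase s(a,b)) = B'
          ext v
          rw [mem_supp, hB']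
          constructor
          · rintro ⟨e, heP, hve⟩
            obtain ⟨hene, heP'⟩ := Finset.mem_erase.1 heP
            have hvB : v ∈ B := by
              rw [← hsupp]; exact mem_supp.2 ⟨e, heP', hve⟩
            have hva : v ≠ a := by
              intro h; subst h
              exact hdj e heP' _ habP hene v ⟨hve, by simp⟩
            have hvb : v ≠ b := by
              intro h; subst h
              exact hdj e heP' _ habP hene v ⟨hve, by simp⟩
            exact Finset.mem_erase.2 ⟨hvb, Finset.mem_erase.2 ⟨hva, hvB⟩⟩
          · intro hv
            obtain ⟨hvb, hv'⟩ := Finset.mem_erase.1 hv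
            obtain ⟨hva, hvB⟩ := Finset.mem_erase.1 hv'
            obtain ⟨e, heP, hve⟩ := mem_supp.1 (by rw [hsupp]; exact hvB)
            refine ⟨e, Finset.mem_erase.2 ⟨?_, heP⟩, hve⟩
            intro h; subst h
            rcases Sym2.mem_iff.1 hve with h | h
            · exact hva h
            · exact hvb h
        · -- injective
          intro P hP Q hQ hPQ
          rw [Finset.mem_filter] at hP hQ
          have habP : s(a,b) ∈ P := by
            have := (key P (hP.1)).1; rwa [hP.2] at this
          have habQ : s(a,b) ∈ Q := by
            have := (key Q (hQ.1)).1; rwa [hQ.2] at this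
          have := congrArg (insert s(a,b)) hPQ
          rwa [Finset.insert_erase habP, Finset.insert_erase habQ] at this
        · -- surjective
          intro Q hQ
          rw [Finset.mem_filter] at hQ
          obtain ⟨-, hnd, hdj, hsupp⟩ := hQ
          have habQ : s(a,b) ∉ Q := by
            intro h
            have : a ∈ supp Q := mem_supp.2 ⟨_, h, by simp⟩
            rw [hsupp, hB'] at this
            exact (Finset.mem_erase.1 (Finset.mem_erase.1 this).2).1 rfl
          refine ⟨insert s(a,b) Q, ?_, ?_⟩
          · rw [Finset.mem_filter]
            have hdj' : ∀ e ∈ insert s(a,b) Q, ∀ f ∈ insert s(a,b) Q, e ≠ f → disj2 e f := by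
              intro e he f hf hef v hv
              rw [Finset.mem_insert] at he hf
              rcases he with rfl | he <;> rcases hf with rfl | hf
              · exact hef rfl
              · have : v ∈ supp Q := mem_supp.2 ⟨f, hf, hv.2⟩
                rw [hsupp, hB'] at this
                obtain ⟨hvb, hv'⟩ := Finset.mem_erase.1 this
                obtain ⟨hva, -⟩ := Finset.mem_erase.1 hv'
                rcases Sym2.mem_iff.1 hv.1 with h | h
                · exact hva h
                · exact hvb h
              · have : v ∈ supp Q := mem_supp.2 ⟨e, he, hv.1⟩
                rw [hsupp, hB'] at this
                obtain ⟨hvb, hv'⟩ := Finset.mem_erase.1 this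
                obtain ⟨hva, -⟩ := Finset.mem_erase.1 hv'
                rcases Sym2.mem_iff.1 hv.2 with h | h
                · exact hva h
                · exact hvb h
              · exact hdj e he f hf hef v hv
            refine ⟨Finset.mem_filter.2 ⟨Finset.mem_univ _, ?_, hdj', ?_⟩, ?_⟩
            · intro e he
              rcases Finset.mem_insert.1 he with rfl | he
              · rw [Sym2.mk_isDiag_iff]; exact hab
              · exact hnd e he
            · -- supp (insert s(a,b) Q) = B
              ext v
              rw [mem_supp]
              constructor
              · rintro ⟨e, heP, hve⟩
                rcases Finset.mem_insert.1 heP with rfl | he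
                · rcases Sym2.mem_iff.1 hve with rfl | rfl
                  · exact ha
                  · exact hbB
                · have : v ∈ supp Q := mem_supp.2 ⟨e, he, hve⟩
                  rw [hsupp, hB'] at this
                  exact (Finset.mem_erase.1 (Finset.mem_erase.1 this).2).2
              · intro hvB
                by_cases hva : v = a
                · exact ⟨s(a,b), Finset.mem_insert_self _ _, by simp [hva]⟩
                · by_cases hvb : v = b
                  · exact ⟨s(a,b), Finset.mem_insert_self _ _, by simp [hvb]⟩
                  · have : v ∈ supp Q := by
                      rw [hsupp, hB']
                      exact Finset.mem_erase.2 ⟨hvb, Finset.mem_erase.2 ⟨hva, hvB⟩⟩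
                    obtain ⟨e, heQ, hve⟩ := mem_supp.1 this
                    exact ⟨e, Finset.mem_insert_of_mem heQ, hve⟩
            · exact pt_spec hdj' (Finset.mem_insert_self _ _)
          · exact Finset.erase_insert habQ
      rw [Finset.sum_congr rfl hfib, Finset.sum_const, Finset.card_erase_of_mem ha, hB,
        smul_eq_mul]
      -- (m - 1) * f2 (m - 2) = f2 m
      rcases m with _ | m
      · omega
      · rcases m with _ | m
        · simp [f2]
        · show (m + 2 - 1) * f2 (m + 2 - 2) = f2 (m + 2)
          simp [f2]

def IsMatch (P : Finset (Sym2 (Fin n))) : Prop :=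
  (∀ e ∈ P, ¬ e.IsDiag) ∧ (∀ e ∈ P, ∀ f ∈ P, e ≠ f → disj2 e f)

lemma supp_card {P : Finset (Sym2 (Fin n))} (h : IsMatch P) :
    (supp P).card = 2 * P.card := by
  have hsupp : supp P = P.biUnion (fun e => Finset.univ.filter (· ∈ e)) := by
    ext v; simp [mem_supp, Finset.mem_biUnion]
  rw [hsupp, Finset.card_biUnion]
  · rw [Finset.sum_congr rfl (g := fun _ => 2), Finset.sum_const, smul_eq_mul, mul_comm]
    intro e he
    induction e using Sym2.inductionOn with
    | hf x y =>
      have hxy : x ≠ y := fun hc => h.1 _ he (Sym2.mk_isDiag_iff.2 hc)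
      have : Finset.univ.filter (· ∈ s(x,y)) = {x, y} := by
        ext v; simp [Sym2.mem_iff]
      rw [this, Finset.card_insert_of_notMem (by simp [hxy]), Finset.card_singleton]
  · intro e he f hf hef
    rw [Function.onFun, Finset.disjoint_left]
    intro v hv hv'
    rw [Finset.mem_filter] at hv hv'
    exact h.2 e he f hf hef v ⟨hv.2, hv'.2⟩

lemma card_match (t : ℕ) :
    (Finset.univ.filter (fun P : Finset (Sym2 (Fin n)) => IsMatch P ∧ P.card = t)).card
      = n.choose (2*t) * f2 (2*t) := by
  rw [Finset.card_eq_sum_card_fiberwise (f := fun P => supp P)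
      (t := Finset.powersetCard (2*t) Finset.univ) (fun P hP => by
        rw [Finset.mem_coe, Finset.mem_filter] at hP
        rw [Finset.mem_coe, Finset.mem_powersetCard_univ, supp_card hP.2.1, hP.2.2])]
  have hfib : ∀ B ∈ Finset.powersetCard (2*t) (Finset.univ : Finset (Fin n)),
      ((Finset.univ.filter (fun P : Finset (Sym2 (Fin n)) => IsMatch P ∧ P.card = t)).filter
        (fun P => supp P = B)).card = f2 (2*t) := by
    intro B hB
    rw [Finset.mem_powersetCard_univ] at hB
    have : (Finset.univ.filter (fun P : Finset (Sym2 (Fin n)) => IsMatch P ∧ P.card = t)).filter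
        (fun P => supp P = B) = Finset.univ.filter (IsPM B) := by
      ext P
      simp only [Finset.mem_filter]
      simp only [Finset.mem_univ, true_and, IsPM, IsMatch]
      constructor
      · rintro ⟨⟨⟨h1, h2⟩, h3⟩, h4⟩
        exact ⟨h1, h2, h4⟩
      · rintro ⟨h1, h2, h4⟩
        refine ⟨⟨⟨h1, h2⟩, ?_⟩, h4⟩
        have := supp_card (P := P) ⟨h1, h2⟩
        rw [h4, hB] at this
        omega
    rw [this, card_pm (2*t) B hB]
  rw [Finset.sum_congr rfl hfib, Finset.sum_const, smul_eq_mul,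
    Finset.card_powersetCard, Finset.card_univ, Fintype.card_fin]

lemma diag_eq {e : Sym2 (Fin n)} (h : e.IsDiag) : ∃ x, e = s(x,x) := by
  induction e using Sym2.inductionOn with
  | hf x y => exact ⟨x, by rw [Sym2.mk_isDiag_iff.1 h]⟩

def good (k : ℕ) (F : Finset (Sym2 (Fin n))) : Prop :=
  F.card = k ∧ ∀ e ∈ F, ∀ f ∈ F, e ≠ f → disj2 e f

lemma card_good (k : ℕ) :
    (Finset.univ.filter (good (n := n) k)).card
      = ∑ t ∈ Finset.range (k+1), n.choose (2*t) * f2 (2*t) * (n - 2*t).choose (k - t) := by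
  rw [Finset.card_eq_sum_card_fiberwise
      (f := fun F => (F.filter (fun e => ¬ e.IsDiag)).card) (t := Finset.range (k+1))
      (fun F hF => by
        rw [Finset.mem_coe, Finset.mem_filter] at hF
        rw [Finset.mem_coe, Finset.mem_range, Nat.lt_succ_iff, ← hF.2.1]
        exact Finset.card_filter_le _ _)]
  refine Finset.sum_congr rfl ?_
  intro t ht
  rw [Finset.mem_range, Nat.lt_succ_iff] at ht
  -- second fiberwise decomposition, over the set of edges
  rw [Finset.card_eq_sum_card_fiberwise
      (f := fun F => F.filter (fun e => ¬ e.IsDiag))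
      (t := Finset.univ.filter (fun M : Finset (Sym2 (Fin n)) => IsMatch M ∧ M.card = t))
      (fun F hF => by
        rw [Finset.mem_coe, Finset.mem_filter] at hF
        obtain ⟨hF1, hcard⟩ := hF
        rw [Finset.mem_filter] at hF1
        obtain ⟨-, hk, hdj⟩ := hF1
        rw [Finset.mem_coe, Finset.mem_filter]
        refine ⟨Finset.mem_univ _, ⟨fun e he => (Finset.mem_filter.1 he).2, ?_⟩, hcard⟩
        intro e he f hf hef
        exact hdj e (Finset.mem_of_mem_filter _ he) f (Finset.mem_of_mem_filter _ hf) hef)]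
  have hfib : ∀ M ∈ Finset.univ.filter
      (fun M : Finset (Sym2 (Fin n)) => IsMatch M ∧ M.card = t),
      (((Finset.univ.filter (good k)).filter
          (fun F => (F.filter (fun e => ¬ e.IsDiag)).card = t)).filter
        (fun F => F.filter (fun e => ¬ e.IsDiag) = M)).card = (n - 2*t).choose (k - t) := by
    intro M hM
    rw [Finset.mem_filter] at hM
    obtain ⟨-, hMm, hMt⟩ := hM
    have hsuppM : (supp M).card = 2*t := by rw [supp_card hMm, hMt]
    have hcompl : ((supp M)ᶜ : Finset (Fin n)).card = n - 2*t := by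
      rw [Finset.card_compl, hsuppM, Fintype.card_fin]
    rw [← hcompl, ← Finset.card_powersetCard]
    refine Finset.card_bij' (fun F _ => Finset.univ.filter (fun v => s(v,v) ∈ F))
      (fun L _ => M ∪ L.image (fun v => s(v,v))) ?_ ?_ ?_ ?_
    · -- forward map lands in powersetCard
      intro F hF
      simp only [Finset.mem_filter] at hF
      obtain ⟨⟨⟨-, hcardF, hdjF⟩, hecard⟩, hedges⟩ := hF
      rw [Finset.mem_powersetCard]
      constructor
      · intro v hv
        rw [Finset.mem_filter] at hv
        have hvF : s(v,v) ∈ F := hv.2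
        rw [Finset.mem_compl]
        intro hvM
        obtain ⟨e, heM, hve⟩ := mem_supp.1 hvM
        have heF : e ∈ F := by
          rw [← hedges] at heM; exact Finset.mem_of_mem_filter _ heM
        have hediag : ¬ e.IsDiag := by
          rw [← hedges] at heM; exact (Finset.mem_filter.1 heM).2
        have hne : e ≠ s(v,v) := fun h => hediag (h ▸ Sym2.mk_isDiag_iff.2 rfl)
        exact hdjF e heF _ hvF hne v ⟨hve, by simp⟩
      · have hsplit := Finset.card_filter_add_card_filter_not (s := F)
          (p := fun e : Sym2 (Fin n) => e.IsDiag)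
        rw [hecard, hcardF] at hsplit
        have hloops : (F.filter (fun e => e.IsDiag)).card = k - t := by omega
        have hbij : (Finset.univ.filter (fun v => s(v,v) ∈ F)).card
            = (F.filter (fun e => e.IsDiag)).card := by
          apply Finset.card_bij (fun v _ => s(v,v))
          · intro v hv
            rw [Finset.mem_filter] at hv ⊢
            exact ⟨hv.2, Sym2.mk_isDiag_iff.2 rfl⟩
          · intro u hu v hv h
            simpa [Sym2.eq_iff] using h
          · intro e he
            rw [Finset.mem_filter] at he
            obtain ⟨x, rfl⟩ := diag_eq he.2
            exact ⟨x, Finset.mem_filter.2 ⟨Finset.mem_univ _, he.1⟩, rfl⟩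
        rw [hbij, hloops]
    · -- backward map lands in the fiber
      intro L hL
      rw [Finset.mem_powersetCard] at hL
      obtain ⟨hLsub, hLcard⟩ := hL
      have hLM : ∀ v ∈ L, v ∉ supp M := fun v hv => Finset.mem_compl.1 (hLsub hv)
      have himginj : Function.Injective (fun v : Fin n => s(v,v)) := by
        intro u v h; simpa [Sym2.eq_iff] using h
      have hdisjMimg : Disjoint M (L.image (fun v => s(v,v))) := by
        rw [Finset.disjoint_right]
        intro e heimg heM
        obtain ⟨v, hvL, rfl⟩ := Finset.mem_image.1 heimg
        exact hLM v hvL (mem_supp.2 ⟨_, heM, by simp⟩)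
      have hedges : (M ∪ L.image (fun v => s(v,v))).filter (fun e => ¬ e.IsDiag) = M := by
        ext e
        rw [Finset.mem_filter, Finset.mem_union]
        constructor
        · rintro ⟨he | he, hnd⟩
          · exact he
          · obtain ⟨v, hvL, rfl⟩ := Finset.mem_image.1 he
            exact absurd (Sym2.mk_isDiag_iff.2 rfl) hnd
        · intro he
          exact ⟨Or.inl he, hMm.1 e he⟩
      have hcardU : (M ∪ L.image (fun v => s(v,v))).card = k := by
        rw [Finset.card_union_of_disjoint hdisjMimg,
          Finset.card_image_of_injective _ himginj, hMt, hLcard]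
        omega
      have hdj : ∀ e ∈ M ∪ L.image (fun v => s(v,v)),
          ∀ f ∈ M ∪ L.image (fun v => s(v,v)), e ≠ f → disj2 e f := by
        intro e he f hf hef v hv
        rw [Finset.mem_union] at he hf
        rcases he with he | he <;> rcases hf with hf | hf
        · exact hMm.2 e he f hf hef v hv
        · obtain ⟨u, huL, rfl⟩ := Finset.mem_image.1 hf
          have huv : v = u := by simpa using hv.2
          subst huv
          exact hLM v huL (mem_supp.2 ⟨e, he, hv.1⟩)
        · obtain ⟨u, huL, rfl⟩ := Finset.mem_image.1 he
          have huv : v = u := by simpa using hv.1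
          subst huv
          exact hLM v huL (mem_supp.2 ⟨f, hf, hv.2⟩)
        · obtain ⟨u, huL, rfl⟩ := Finset.mem_image.1 he
          obtain ⟨w, hwL, rfl⟩ := Finset.mem_image.1 hf
          have h1 : v = u := by simpa using hv.1
          have h2 : v = w := by simpa using hv.2
          subst h1
          exact hef (by rw [h2])
      simp only [Finset.mem_filter]
      exact ⟨⟨⟨Finset.mem_univ _, hcardU, hdj⟩, by rw [hedges, hMt]⟩, hedges⟩
    · -- left inverse
      intro F hF
      simp only [Finset.mem_filter] at hF
      obtain ⟨⟨⟨-, hcardF, hdjF⟩, hecard⟩, hedges⟩ := hF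
      ext e
      rw [Finset.mem_union]
      constructor
      · rintro (he | he)
        · rw [← hedges] at he
          exact Finset.mem_of_mem_filter _ he
        · obtain ⟨v, hv, rfl⟩ := Finset.mem_image.1 he
          exact (Finset.mem_filter.1 hv).2
      · intro he
        by_cases hd : e.IsDiag
        · obtain ⟨x, rfl⟩ := diag_eq hd
          exact Or.inr (Finset.mem_image.2 ⟨x, Finset.mem_filter.2 ⟨Finset.mem_univ _, he⟩, rfl⟩)
        · exact Or.inl (by rw [← hedges]; exact Finset.mem_filter.2 ⟨he, hd⟩)
    · -- right inverse
      intro L hL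
      ext v
      rw [Finset.mem_filter, Finset.mem_union]
      constructor
      · rintro ⟨-, h | h⟩
        · exact absurd (Sym2.mk_isDiag_iff.2 rfl) (hMm.1 _ h)
        · obtain ⟨u, hu, hequ⟩ := Finset.mem_image.1 h
          have : u = v := by simpa [Sym2.eq_iff] using hequ
          exact this ▸ hu
      · intro hv
        exact ⟨Finset.mem_univ _, Or.inr (Finset.mem_image.2 ⟨v, hv, rfl⟩)⟩
  rw [Finset.sum_congr rfl hfib, Finset.sum_const, smul_eq_mul, card_match]

lemma f2_mul (t : ℕ) : f2 (2*t) * (t.factorial * 2^t) = (2*t).factorial := by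
  induction t with
  | zero => rfl
  | succ t ih =>
    have h1 : 2 * (t+1) = 2*t+2 := by ring
    rw [h1]
    have h2 : f2 (2*t+2) = (2*t+1) * f2 (2*t) := rfl
    have h3 : (2*t+2) = (2*t+1)+1 := rfl
    rw [h2, Nat.factorial_succ, pow_succ, h3, Nat.factorial_succ, Nat.factorial_succ]
    calc (2*t+1) * f2 (2*t) * ((t+1) * t.factorial * (2^t * 2))
        = ((2*t+1)+1) * (2*t+1) * (f2 (2*t) * (t.factorial * 2^t)) := by ring
      _ = ((2*t+1)+1) * ((2*t+1) * (2*t).factorial) := by rw [ih]; ring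

lemma range_vecOf :
    Set.range (vecOf (n := n)) = {v | (∃ i j : Fin n, i < j ∧ v = eps i + eps j) ∨
      ∃ i : Fin n, v = (2 : ℝ) • eps i} := by
  ext v
  constructor
  · rintro ⟨e, rfl⟩
    induction e using Sym2.inductionOn with
    | hf i j =>
      rcases lt_trichotomy i j with h | rfl | h
      · exact Or.inl ⟨i, j, h, (vecOf_mk i j).symm⟩
      · exact Or.inr ⟨i, by rw [vecOf_mk, two_smul]⟩
      · exact Or.inl ⟨j, i, h, by rw [vecOf_mk, add_comm]⟩
  · rintro (⟨i, j, hij, rfl⟩ | ⟨i, rfl⟩)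
    · exact ⟨s(i,j), vecOf_mk i j⟩
    · exact ⟨s(i,i), by rw [vecOf_mk, two_smul]⟩

lemma pair_iff' {e f : Sym2 (Fin n)} (hef : e ≠ f) :
    (vecOf e + vecOf f ∉ CC n ∧ vecOf e - vecOf f ∉ CC n) ↔
      ∀ i : Fin n, ¬(vecOf e i ≠ 0 ∧ vecOf f i ≠ 0) := by
  induction e using Sym2.inductionOn with
  | hf a b =>
    induction f using Sym2.inductionOn with
    | hf c d =>
      rw [pair_iff hef]
      simp only [ne_eq, vecOf_ne_zero_iff]

lemma part1 (S : Set (Fin n → ℝ)) (hS : S ⊆ Set.range vecOf) :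
    S.Pairwise (fun x y => x + y ∉ CC n ∧ x - y ∉ CC n) ↔
      ∀ x ∈ S, ∀ y ∈ S, x ≠ y → ∀ i : Fin n, ¬(x i ≠ 0 ∧ y i ≠ 0) := by
  constructor
  · intro h x hx y hy hxy
    obtain ⟨e, rfl⟩ := hS hx
    obtain ⟨f, rfl⟩ := hS hy
    have hef : e ≠ f := fun h' => hxy (by rw [h'])
    exact (pair_iff' hef).1 (h hx hy hxy)
  · intro h x hx y hy hxy
    obtain ⟨e, rfl⟩ := hS hx
    obtain ⟨f, rfl⟩ := hS hy
    have hef : e ≠ f := fun h' => hxy (by rw [h'])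
    exact (pair_iff' hef).2 (h _ hx _ hy hxy)

lemma ncard_filter {β : Type*} [Fintype β] [DecidableEq β] (p : Set β → Prop) :
    Set.ncard {T : Set β | p T} = (Finset.univ.filter (fun F : Finset β => p ↑F)).card := by
  have h1 : {T : Set β | p T} = (fun F : Finset β => (↑F : Set β)) '' {F : Finset β | p ↑F} := by
    ext T
    constructor
    · intro hT
      exact ⟨T.toFinset, by simpa [Set.coe_toFinset] using hT, Set.coe_toFinset T⟩
    · rintro ⟨F, hF, rfl⟩; exact hF
  rw [h1, Set.ncard_image_of_injective _ Finset.coe_injective, Set.ncard_eq_toFinset_card']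
  simp [Set.toFinset_setOf]

lemma part2 (k : ℕ) :
    Set.ncard {S : Set (Fin n → ℝ) | S ⊆ Set.range vecOf ∧ S.ncard = k ∧
        ∀ x ∈ S, ∀ y ∈ S, x ≠ y → ∀ i : Fin n, ¬(x i ≠ 0 ∧ y i ≠ 0)}
      = (Finset.univ.filter (good (n := n) k)).card := by
  have himg : {S : Set (Fin n → ℝ) | S ⊆ Set.range vecOf ∧ S.ncard = k ∧
        ∀ x ∈ S, ∀ y ∈ S, x ≠ y → ∀ i : Fin n, ¬(x i ≠ 0 ∧ y i ≠ 0)}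
      = (Set.image vecOf) '' {T : Set (Sym2 (Fin n)) | T.ncard = k ∧
          ∀ e ∈ T, ∀ f ∈ T, e ≠ f → disj2 e f} := by
    ext S
    simp only [Set.mem_setOf_eq, Set.mem_image]
    constructor
    · rintro ⟨hsub, hcard, hdisj⟩
      have himgS : vecOf '' (vecOf ⁻¹' S) = S := Set.image_preimage_eq_of_subset hsub
      refine ⟨vecOf ⁻¹' S, ⟨?_, ?_⟩, himgS⟩
      · rw [← himgS, Set.ncard_image_of_injective _ vecOf_injective] at hcard
        exact hcard
      · intro e he f hf hef v hv
        have hxy : vecOf e ≠ vecOf f := fun h => hef (vecOf_injective h)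
        exact hdisj _ he _ hf hxy v
          ⟨(vecOf_ne_zero_iff _ _).2 hv.1, (vecOf_ne_zero_iff _ _).2 hv.2⟩
    · rintro ⟨T, ⟨hTcard, hTdisj⟩, rfl⟩
      refine ⟨Set.image_subset_range _ _, ?_, ?_⟩
      · rw [Set.ncard_image_of_injective _ vecOf_injective]; exact hTcard
      · rintro x ⟨e, he, rfl⟩ y ⟨f, hf, rfl⟩ hxy i hcon
        have hef : e ≠ f := fun h => hxy (by rw [h])
        exact hTdisj e he f hf hef i
          ⟨(vecOf_ne_zero_iff _ _).1 hcon.1, (vecOf_ne_zero_iff _ _).1 hcon.2⟩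
  rw [himg, Set.ncard_image_of_injective _ (Set.image_injective.2 vecOf_injective),
    ncard_filter]
  congr 1
  ext F
  simp only [Finset.mem_filter, Set.ncard_coe_finset, good, Finset.mem_coe]

lemma sum_eq (k : ℕ) :
    ∑ t ∈ Finset.range (k+1), n.choose (2*t) * f2 (2*t) * (n - 2*t).choose (k - t)
      = ∑ t ∈ Finset.range (min k (n - k) + 1),
          (n - 2*t).choose (k - t) *
            (n.choose (2*t) * (2*t).factorial / (t.factorial * 2^t)) := by
  have hterm : ∀ t : ℕ, n.choose (2*t) * f2 (2*t) * (n - 2*t).choose (k - t)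
      = (n - 2*t).choose (k - t) *
          (n.choose (2*t) * (2*t).factorial / (t.factorial * 2^t)) := by
    intro t
    have hpos : 0 < t.factorial * 2^t :=
      Nat.mul_pos t.factorial_pos (pow_pos (by norm_num) t)
    have hdvd : (t.factorial * 2^t) ∣ (2*t).factorial :=
      ⟨f2 (2*t), by rw [← f2_mul t]; ring⟩
    rw [Nat.mul_div_assoc _ hdvd, Nat.div_eq_of_eq_mul_left hpos (f2_mul t).symm]
    ring
  rw [Finset.sum_congr rfl (fun t _ => hterm t)]
  symm
  apply Finset.sum_subset
  · intro t htt
    rw [Finset.mem_range] at htt ⊢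
    omega
  · intro t ht hnot
    rw [Finset.mem_range] at ht hnot
    by_cases h2t : 2*t ≤ n
    · have hz : (n - 2*t).choose (k - t) = 0 := Nat.choose_eq_zero_of_lt (by omega)
      rw [hz, zero_mul]
    · have hz : n.choose (2*t) = 0 := Nat.choose_eq_zero_of_lt (by omega)
      rw [hz, zero_mul, Nat.zero_div, mul_zero]

end SO8

/-- In type `C_n`, for the maximal abelian ideal
`Δ_𝔞 = {ε_i + ε_j : i < j} ∪ {2ε_i}`: a subset is strongly orthogonal (sums and differences
of distinct members are not roots of `C_n`) iff all indices occurring in its roots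
(i.e. the supports) are pairwise disjoint, and the number `c_{n,k}` of strongly orthogonal
`k`-subsets equals `Σ_t C(n-2t, k-t)·C(n,2t)·(2t)!/(t!·2^t)`. -/
theorem stmt8 (n : ℕ) (ΔC Δa : Set (Fin n → ℝ))
    (hΔC : ΔC = {v | (∃ i j : Fin n, i ≠ j ∧
        (v = eps i + eps j ∨ v = eps i - eps j ∨ v = -eps i - eps j)) ∨
      ∃ i : Fin n, v = (2 : ℝ) • eps i ∨ v = -((2 : ℝ) • eps i)})
    (hΔa : Δa = {v | (∃ i j : Fin n, i < j ∧ v = eps i + eps j) ∨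
      ∃ i : Fin n, v = (2 : ℝ) • eps i}) :
    (∀ S : Set (Fin n → ℝ), S ⊆ Δa →
      (S.Pairwise (fun x y => x + y ∉ ΔC ∧ x - y ∉ ΔC) ↔
        ∀ x ∈ S, ∀ y ∈ S, x ≠ y → ∀ i : Fin n, ¬(x i ≠ 0 ∧ y i ≠ 0))) ∧
    (∀ k : ℕ,
      Set.ncard {S : Set (Fin n → ℝ) | S ⊆ Δa ∧ S.ncard = k ∧
          S.Pairwise (fun x y => x + y ∉ ΔC ∧ x - y ∉ ΔC)} =
        ∑ t ∈ Finset.range (min k (n - k) + 1),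
          Nat.choose (n - 2 * t) (k - t) *
            (Nat.choose n (2 * t) * Nat.factorial (2 * t) /
              (Nat.factorial t * 2 ^ t))) := by
  have hCC : ΔC = SO8.CC n := hΔC
  have hAa : Δa = Set.range SO8.vecOf := by rw [hΔa, SO8.range_vecOf]
  subst hCC hAa
  constructor
  · intro S hS
    exact SO8.part1 S hS
  · intro k
    have hset : {S : Set (Fin n → ℝ) | S ⊆ Set.range SO8.vecOf ∧ S.ncard = k ∧
          S.Pairwise (fun x y => x + y ∉ SO8.CC n ∧ x - y ∉ SO8.CC n)}
        = {S : Set (Fin n → ℝ) | S ⊆ Set.range SO8.vecOf ∧ S.ncard = k ∧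
          ∀ x ∈ S, ∀ y ∈ S, x ≠ y → ∀ i : Fin n, ¬(x i ≠ 0 ∧ y i ≠ 0)} := by
      ext S
      simp only [Set.mem_setOf_eq]
      constructor
      · rintro ⟨h1, h2, h3⟩
        exact ⟨h1, h2, (SO8.part1 S h1).1 h3⟩
      · rintro ⟨h1, h2, h3⟩
        exact ⟨h1, h2, (SO8.part1 S h1).2 h3⟩
    rw [hset, SO8.part2, SO8.card_good, SO8.sum_eq]
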